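/- If f_n : ℝ → ℝ is a sequence of functions decreasing pointwise to f : ℝ → ℝ, then the convex hulls f_n^c decrease pointwise to f^c, i.e., lim_n f_n^c(k) = f^c(k) for every k ∈ ℝ. -/
import Mathlib

open MeasureTheory Set

/-- The convex hull of a function: the largest convex function below it. -/
noncomputable def convHullFn (h : ℝ → ℝ) : ℝ → ℝ := fun x =>
  sSup {y : ℝ | ∃ g : ℝ → ℝ, ConvexOn ℝ Set.univ g ∧ (∀ z, g z ≤ h z) ∧ y = g x}

lemma chf_bdd (h : ℝ → ℝ) (x : ℝ) :
    BddAbove {y : ℝ | ∃ g : ℝ → ℝ, ConvexOn ℝ Set.univ g ∧ (∀ z, g z ≤ h z) ∧ y = g x} :=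
  ⟨h x, by rintro y ⟨g, _, hg, rfl⟩; exact hg x⟩

lemma chf_mem {h φ : ℝ → ℝ} (hφ : ConvexOn ℝ Set.univ φ) (hle : ∀ z, φ z ≤ h z) (x : ℝ) :
    φ x ∈ {y : ℝ | ∃ g : ℝ → ℝ, ConvexOn ℝ Set.univ g ∧ (∀ z, g z ≤ h z) ∧ y = g x} :=
  ⟨φ, hφ, hle, rfl⟩

lemma chf_le {h φ : ℝ → ℝ} (hφ : ConvexOn ℝ Set.univ φ) (hle : ∀ z, φ z ≤ h z) (x : ℝ) :
    convHullFn h x ≤ h x :=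
  csSup_le ⟨φ x, chf_mem hφ hle x⟩ (by rintro y ⟨g, _, hg, rfl⟩; exact hg x)

lemma chf_ge {h φ : ℝ → ℝ} (hφ : ConvexOn ℝ Set.univ φ) (hle : ∀ z, φ z ≤ h z) (x : ℝ) :
    φ x ≤ convHullFn h x :=
  le_csSup (chf_bdd h x) (chf_mem hφ hle x)

lemma chf_mono {h1 h2 φ : ℝ → ℝ} (hφ : ConvexOn ℝ Set.univ φ) (hle : ∀ z, φ z ≤ h1 z)
    (h12 : ∀ z, h1 z ≤ h2 z) (x : ℝ) : convHullFn h1 x ≤ convHullFn h2 x :=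
  csSup_le_csSup (chf_bdd h2 x) ⟨φ x, chf_mem hφ hle x⟩
    (by rintro y ⟨g, hgc, hg, rfl⟩; exact ⟨g, hgc, fun z => (hg z).trans (h12 z), rfl⟩)

theorem convHull_of_decreasing_limit (f : ℕ → ℝ → ℝ) (flim : ℝ → ℝ)
    (hmono : ∀ x : ℝ, Antitone fun n => f n x)
    (hlim : ∀ x : ℝ, Filter.Tendsto (fun n => f n x) Filter.atTop (nhds (flim x)))
    (hmin : ∃ φ : ℝ → ℝ, ConvexOn ℝ Set.univ φ ∧ ∀ z, φ z ≤ flim z) :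
    ∀ k : ℝ, Filter.Tendsto (fun n => convHullFn (f n) k) Filter.atTop
      (nhds (convHullFn flim k)) := by
  obtain ⟨φ, hφc, hφle⟩ := hmin
  have hflim_le : ∀ n x, flim x ≤ f n x := fun n x =>
    le_of_tendsto (hlim x) (Filter.eventually_atTop.2 ⟨n, fun m hm => hmono x hm⟩)
  have hφf : ∀ n z, φ z ≤ f n z := fun n z => (hφle z).trans (hflim_le n z)
  intro k
  set H : ℕ → ℝ → ℝ := fun n => convHullFn (f n) with hH
  have hanti : ∀ x, Antitone fun n => H n x := fun x n m hnm =>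
    chf_mono hφc (hφf m) (fun z => hmono z hnm) x
  have hbdd : ∀ x, BddBelow (Set.range fun n => H n x) := fun x =>
    ⟨φ x, by rintro y ⟨n, rfl⟩; exact chf_ge hφc (hφf n) x⟩
  set g : ℝ → ℝ := fun x => ⨅ n, H n x with hg
  have htend : ∀ x, Filter.Tendsto (fun n => H n x) Filter.atTop (nhds (g x)) := fun x =>
    tendsto_atTop_ciInf (hanti x) (hbdd x)
  have hgleH : ∀ n x, g x ≤ H n x := fun n x => ciInf_le (hbdd x) n
  have hHle : ∀ n x, H n x ≤ f n x := fun n x => chf_le hφc (hφf n) x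
  have hgconv : ConvexOn ℝ Set.univ g := by
    refine ⟨convex_univ, fun x _ y _ a b ha hb hab => ?_⟩
    have hT : Filter.Tendsto (fun n => a * H n x + b * H n y) Filter.atTop
        (nhds (a * g x + b * g y)) := ((htend x).const_mul a).add ((htend y).const_mul b)
    have : g (a • x + b • y) ≤ a * g x + b * g y := by
      refine ge_of_tendsto' hT (fun n => ?_)
      have hc : H n (a • x + b • y) ≤ a • H n x + b • H n y := by
        refine csSup_le ⟨φ (a • x + b • y), chf_mem hφc (hφf n) _⟩ ?_
        rintro w ⟨p, hpc, hp, rfl⟩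
        calc p (a • x + b • y) ≤ a • p x + b • p y :=
              hpc.2 (mem_univ x) (mem_univ y) ha hb hab
          _ ≤ a • H n x + b • H n y := by
              gcongr
              · exact chf_ge hpc hp x
              · exact chf_ge hpc hp y
      calc g (a • x + b • y) ≤ H n (a • x + b • y) := hgleH n _
        _ ≤ a * H n x + b * H n y := by simpa [smul_eq_mul] using hc
    simpa [smul_eq_mul] using this
  have hgflim : ∀ z, g z ≤ flim z := fun z =>
    ge_of_tendsto' (hlim z) (fun n => (hgleH n z).trans (hHle n z))
  have hLg : convHullFn flim k = g k :=
    le_antisymm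
      (le_ciInf fun n => chf_mono hφc hφle (hflim_le n) k)
      (le_csSup (chf_bdd flim k) ⟨g, hgconv, hgflim, rfl⟩)
  rw [hLg]
  exact htend k
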